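/- arXiv:2408.04079 — 2 statements merged into one kernel-verified Lean document; each statement's English description precedes it below -/
import Mathlib

section
/- Let R be a local ring with 1/2 and let I ∈ GL_n(R) satisfy I² = E. Then I is conjugate in GL_n(R) to a diagonal matrix diag(1,...,1,-1,...,-1) with t ones and s = n - t negative ones for some t. -/
open Matrix Finset

namespace Stmt4Aux

variable {R : Type*} [Ring R] {n : ℕ}

/-- block diagonal-ish lift: top-left scalar `ε`, bottom-right `M`, off-diagonal first row/col 0
except we also allow a зеро. -/
def liftM (ε : R) (M : Matrix (Fin n) (Fin n) R) : Matrix (Fin (n+1)) (Fin (n+1)) R :=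
  Matrix.of fun i j =>
    Fin.cases (Fin.cases ε (fun _ => (0:R)) j) (fun p => Fin.cases 0 (fun q => M p q) j) i

@[simp] lemma liftM_zero_zero (ε : R) (M : Matrix (Fin n) (Fin n) R) : liftM ε M 0 0 = ε := by
  simp [liftM]

@[simp] lemma liftM_zero_succ (ε : R) (M : Matrix (Fin n) (Fin n) R) (q : Fin n) :
    liftM ε M 0 q.succ = 0 := by simp [liftM]

@[simp] lemma liftM_succ_zero (ε : R) (M : Matrix (Fin n) (Fin n) R) (p : Fin n) :
    liftM ε M p.succ 0 = 0 := by simp [liftM]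

@[simp] lemma liftM_succ_succ (ε : R) (M : Matrix (Fin n) (Fin n) R) (p q : Fin n) :
    liftM ε M p.succ q.succ = M p q := by simp [liftM]

lemma liftM_mul (ε δ : R) (M N : Matrix (Fin n) (Fin n) R) :
    liftM ε M * liftM δ N = liftM (ε * δ) (M * N) := by
  ext i j
  rw [Matrix.mul_apply, Fin.sum_univ_succ]
  induction i using Fin.cases with
  | zero =>
    induction j using Fin.cases with
    | zero => simp
    | succ q => simp
  | succ p =>
    induction j using Fin.cases with
    | zero => simp
    | succ q => simp [Matrix.mul_apply]

lemma liftM_one : liftM (1:R) (1 : Matrix (Fin n) (Fin n) R) = 1 := by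
  ext i j
  induction i using Fin.cases with
  | zero =>
    induction j using Fin.cases with
    | zero => simp [Matrix.one_apply]
    | succ q => simp [Matrix.one_apply, (Fin.succ_ne_zero q).symm]
  | succ p =>
    induction j using Fin.cases with
    | zero => simp [Matrix.one_apply, Fin.succ_ne_zero p]
    | succ q => simp [Matrix.one_apply, Fin.succ_inj]

lemma liftM_diagonal (ε : R) (d : Fin n → R) :
    liftM ε (Matrix.diagonal d) = Matrix.diagonal (Fin.cons ε d) := by
  ext i j
  induction i using Fin.cases with
  | zero =>
    induction j using Fin.cases with
    | zero => simp
    | succ q => simp [Matrix.diagonal_apply, (Fin.succ_ne_zero q).symm]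
  | succ p =>
    induction j using Fin.cases with
    | zero => simp [Matrix.diagonal_apply, Fin.succ_ne_zero p]
    | succ q => simp [Matrix.diagonal_apply, Fin.succ_inj]

variable {R : Type*} [Ring R] {n : ℕ}

/-- elementary matrix with first row `(0, x)` and zeros elsewhere. -/
def Ed (x : Fin n → R) : Matrix (Fin (n+1)) (Fin (n+1)) R :=
  Matrix.of fun i j => Fin.cases (Fin.cases (0:R) x j) (fun _ => 0) i

@[simp] lemma Ed_zero_zero (x : Fin n → R) : Ed x 0 0 = 0 := by simp [Ed]
@[simp] lemma Ed_zero_succ (x : Fin n → R) (q : Fin n) : Ed x 0 q.succ = x q := by simp [Ed]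
@[simp] lemma Ed_succ (x : Fin n → R) (p : Fin n) (j : Fin (n+1)) : Ed x p.succ j = 0 := by
  simp [Ed]

@[simp] lemma Ed_apply_zero (x : Fin n → R) (i : Fin (n+1)) : Ed x i 0 = 0 := by
  induction i using Fin.cases <;> simp

lemma mul_Ed (M : Matrix (Fin (n+1)) (Fin (n+1)) R) (x : Fin n → R) (i j : Fin (n+1)) :
    (M * Ed x) i j = M i 0 * Ed x 0 j := by
  rw [Matrix.mul_apply, Fin.sum_univ_succ]
  simp

lemma Ed_mul_zero (M : Matrix (Fin (n+1)) (Fin (n+1)) R) (x : Fin n → R) (j : Fin (n+1)) :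
    (Ed x * M) 0 j = ∑ q, x q * M q.succ j := by
  rw [Matrix.mul_apply, Fin.sum_univ_succ]
  simp

lemma Ed_mul_succ (M : Matrix (Fin (n+1)) (Fin (n+1)) R) (x : Fin n → R) (p : Fin n)
    (j : Fin (n+1)) : (Ed x * M) p.succ j = 0 := by
  rw [Matrix.mul_apply]
  simp

lemma Ed_mul_Ed (x y : Fin n → R) : Ed x * Ed y = 0 := by
  ext i j
  induction i using Fin.cases with
  | zero => rw [Ed_mul_zero]; simp
  | succ p => rw [Ed_mul_succ]; simp

/-- The unit `1 + Ed x`. -/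
def EdUnit (x : Fin n → R) : (Matrix (Fin (n+1)) (Fin (n+1)) R)ˣ where
  val := 1 + Ed x
  inv := 1 - Ed x
  val_inv := by
    have h : (1 + Ed x) * (1 - Ed x) = 1 - Ed x * Ed x := by noncomm_ring
    rw [h, Ed_mul_Ed, sub_zero]
  inv_val := by
    have h : (1 - Ed x) * (1 + Ed x) = 1 - Ed x * Ed x := by noncomm_ring
    rw [h, Ed_mul_Ed, sub_zero]

/-- Extend a vector with unit first coordinate to an invertible matrix having it
as first column. -/
lemma exists_unit_col {n : ℕ} (u : Fin (n+1) → R) (hu : IsUnit (u 0)) :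
    ∃ g : (Matrix (Fin (n+1)) (Fin (n+1)) R)ˣ, ∀ i, Units.val g i 0 = u i := by
  classical
  set a : R := ↑hu.unit⁻¹ with ha
  have hau : a * u 0 = 1 := by
    have := hu.unit.inv_mul
    rwa [IsUnit.unit_spec] at this
  have hua : u 0 * a = 1 := by
    have := hu.unit.mul_inv
    rwa [IsUnit.unit_spec] at this
  have hz : ∀ q : Fin n, (0 : Fin (n+1)) ≠ q.succ := fun q => (Fin.succ_ne_zero q).symm
  have hz' : ∀ q : Fin n, (q.succ : Fin (n+1)) ≠ 0 := fun q => Fin.succ_ne_zero q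
  refine ⟨⟨Matrix.of fun i j => if j = 0 then u i else if i = j then 1 else 0,
    Matrix.of fun i j => if j = 0 then (if i = 0 then a else -(u i * a)) else if i = j then 1 else 0,
    ?_, ?_⟩, fun i => by simp⟩
  · ext i j
    rw [Matrix.mul_apply, Fin.sum_univ_succ]
    by_cases hj : j = 0
    · subst hj
      by_cases hi : i = 0
      · subst hi
        simp [hz, hz', hua, Fin.succ_ne_zero]
      · obtain ⟨p, rfl⟩ := Fin.exists_succ_eq.2 hi
        simp only [Matrix.of_apply, if_pos rfl, Matrix.one_apply]
        simp only [if_pos rfl, Fin.succ_ne_zero, if_false, if_neg (Fin.succ_ne_zero p)]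
        rw [Finset.sum_eq_single p]
        · simp [hz, hz', Fin.succ_ne_zero, mul_assoc, hua, Matrix.one_apply, (Fin.succ_ne_zero p).symm]
        · intro q _ hq
          simp [hz, hz', Fin.succ_inj, hq, Ne.symm hq]
        · simp [hz, hz']
    · obtain ⟨r, rfl⟩ := Fin.exists_succ_eq.2 hj
      simp only [Matrix.of_apply, if_pos rfl, if_neg (Fin.succ_ne_zero r)]
      rw [Finset.sum_eq_single r]
      · by_cases hi : i = 0
        · subst hi
          simp [hz, hz', Matrix.one_apply, (Fin.succ_ne_zero r).symm]
        · simp [hz, hz', Matrix.one_apply, Fin.succ_ne_zero, mul_comm]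
      · intro q _ hq
        simp [hz, hz', Fin.succ_ne_zero, Fin.succ_inj, hq, Ne.symm hq]
      · simp [hz, hz']
  · ext i j
    rw [Matrix.mul_apply, Fin.sum_univ_succ]
    by_cases hj : j = 0
    · subst hj
      by_cases hi : i = 0
      · subst hi
        simp [hz, hz', hau, Fin.succ_ne_zero]
      · obtain ⟨p, rfl⟩ := Fin.exists_succ_eq.2 hi
        simp only [Matrix.of_apply, if_pos rfl, if_neg (Fin.succ_ne_zero p)]
        rw [Finset.sum_eq_single p]
        · simp [hz, hz', Fin.succ_ne_zero, Matrix.one_apply, (Fin.succ_ne_zero p).symm, mul_assoc, hau]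
        · intro q _ hq
          simp [hz, hz', Fin.succ_ne_zero, Fin.succ_inj, hq, Ne.symm hq]
        · simp [hz, hz']
    · obtain ⟨r, rfl⟩ := Fin.exists_succ_eq.2 hj
      simp only [Matrix.of_apply, if_pos rfl, if_neg (Fin.succ_ne_zero r)]
      rw [Finset.sum_eq_single r]
      · by_cases hi : i = 0
        · subst hi
          simp [hz, hz', Matrix.one_apply, (Fin.succ_ne_zero r).symm]
        · simp [hz, hz', Matrix.one_apply, Fin.succ_ne_zero, Fin.succ_inj]
      · intro q _ hq
        simp [hz, hz', Fin.succ_ne_zero, Fin.succ_inj, hq, Ne.symm hq]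
      · simp [hz, hz']

-- the main induction
theorem key {R : Type*} [Ring R] [IsLocalRing R] (h2 : IsUnit (2 : R)) :
    ∀ (n : ℕ) (I : Matrix (Fin n) (Fin n) R), I * I = 1 →
    ∃ (g : (Matrix (Fin n) (Fin n) R)ˣ) (d : Fin n → R),
      (∀ i, d i = 1 ∨ d i = -1) ∧ Units.val g * I * Units.val g⁻¹ = Matrix.diagonal d := by
  intro n
  induction n with
  | zero =>
      intro I hI
      exact ⟨1, fun i => i.elim0, fun i => i.elim0, Subsingleton.elim _ _⟩
  | succ n ih =>
      intro I hI
      classical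
      have hz : ∀ q : Fin n, (0 : Fin (n+1)) ≠ q.succ := fun q => (Fin.succ_ne_zero q).symm
      set half : R := ↑h2.unit⁻¹ with hhalfdef
      have hhc : ∀ r : R, Commute half r := by
        intro r
        have h2c : Commute (2:R) r := by
          have : ((2:ℕ):R) = (2:R) := by norm_cast
          simpa [this] using (Nat.cast_commute 2 r)
        have h' : Commute (↑h2.unit : R) r := by rwa [IsUnit.unit_spec]
        simpa [hhalfdef] using h'.units_inv_left
      have hhalf2 : half * 2 = 1 := by
        have := h2.unit.inv_mul
        rwa [IsUnit.unit_spec] at this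
      have hhh : half + half = 1 := by rw [← mul_two, hhalf2]
      have hpull : ∀ (M : Matrix (Fin (n+1)) (Fin (n+1)) R) (a : R), (∀ r : R, Commute a r) →
          ∀ (f : Fin (n+1) → R) (i), M.mulVec (fun j => a * f j) i = a * M.mulVec f i := by
        intro M a hac f i
        simp only [Matrix.mulVec, dotProduct]
        rw [Finset.mul_sum]
        refine Finset.sum_congr rfl fun j _ => ?_
        rw [← mul_assoc, ← (hac (M i j)).eq, mul_assoc]
      set c : Fin (n+1) → R := fun i => I i 0 with hcdef
      set e0 : Fin (n+1) → R := fun i => if i = 0 then 1 else 0 with he0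
      have hIe0 : I.mulVec e0 = c := by
        funext i
        simp [Matrix.mulVec, dotProduct, he0, hcdef]
      have hIc : I.mulVec c = e0 := by
        funext i
        have h1 : I.mulVec c i = (I * I) i 0 := by
          simp [Matrix.mulVec, dotProduct, Matrix.mul_apply, hcdef]
        rw [h1, hI]
        simp [Matrix.one_apply, he0]
      obtain ⟨u, ε, hεpm, huu, hIu⟩ :
          ∃ (u : Fin (n+1) → R) (ε : R), (ε = 1 ∨ ε = -1) ∧ IsUnit (u 0) ∧
            I.mulVec u = fun i => ε * u i := by
        set v : Fin (n+1) → R := fun i => half * ((c + e0) i) with hv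
        set w : Fin (n+1) → R := fun i => half * ((e0 - c) i) with hw
        have hIv : I.mulVec v = fun i => 1 * v i := by
          funext i
          rw [hpull I half hhc (c + e0) i, Matrix.mulVec_add, hIc, hIe0, one_mul]
          simp only [hv, Pi.add_apply]
          rw [add_comm (c i) (e0 i)]
        have hIw : I.mulVec w = fun i => (-1) * w i := by
          funext i
          rw [hpull I half hhc (e0 - c) i, Matrix.mulVec_sub, hIc, hIe0, neg_one_mul]
          simp only [hw, Pi.sub_apply]
          rw [mul_sub, mul_sub, neg_sub]
        have hone : v 0 + w 0 = 1 := by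
          have h1 : v 0 + w 0 = half * ((c 0 + e0 0) + (e0 0 - c 0)) := by
            simp only [hv, hw, Pi.add_apply, Pi.sub_apply, ← mul_add]
          have h2 : (c 0 + e0 0) + (e0 0 - c 0) = 2 := by
            have : e0 0 = 1 := by simp [he0]
            rw [this, ← one_add_one_eq_two]
            abel
          rw [h1, h2, hhalf2]
        rcases IsLocalRing.isUnit_or_isUnit_of_add_one hone with h | h
        · exact ⟨v, 1, Or.inl rfl, h, hIv⟩
        · exact ⟨w, -1, Or.inr rfl, h, hIw⟩
      have hεc : ∀ r : R, Commute ε r := by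
        rcases hεpm with rfl | rfl
        · exact fun r => Commute.one_left r
        · exact fun r => (Commute.one_left r).neg_left
      have hε2 : ε * ε = 1 := by rcases hεpm with rfl | rfl <;> simp
      obtain ⟨g, hg⟩ := exists_unit_col u huu
      set J : Matrix (Fin (n+1)) (Fin (n+1)) R := Units.val g⁻¹ * I * Units.val g with hJdef
      have hJJ : J * J = 1 := by
        have h1 : J * J = Units.val g⁻¹ * (I * (Units.val g * Units.val g⁻¹) * I) * Units.val g := by
          rw [hJdef]; noncomm_ring
        rw [h1, Units.mul_inv, mul_one, hI, mul_one, Units.inv_mul]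
      have hJcol : ∀ i, J i 0 = ε * e0 i := by
        intro i
        have h1 : J i 0 = (Units.val g⁻¹ * I).mulVec u i := by
          rw [hJdef, Matrix.mul_apply]
          simp only [Matrix.mulVec, dotProduct]
          exact Finset.sum_congr rfl fun k _ => by rw [hg k]
        have h2 : (Units.val g⁻¹ * I).mulVec u = (Units.val g⁻¹).mulVec (I.mulVec u) := by
          rw [← Matrix.mulVec_mulVec]
        have h3 : (Units.val g⁻¹).mulVec (fun j => ε * u j) i
            = ε * ((Units.val g⁻¹).mulVec u i) := hpull _ ε hεc u i
        have h4 : (Units.val g⁻¹).mulVec u i = e0 i := by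
          have h5 : (Units.val g⁻¹).mulVec u i = (Units.val g⁻¹ * Units.val g) i 0 := by
            rw [Matrix.mul_apply]
            simp only [Matrix.mulVec, dotProduct]
            exact Finset.sum_congr rfl fun k _ => by rw [hg k]
          rw [h5, Units.inv_mul]
          simp [Matrix.one_apply, he0]
        rw [h1, h2, hIu, h3, h4]
      have hJ00 : J 0 0 = ε := by
        have := hJcol 0
        simpa [he0] using this
      have hJs0 : ∀ p : Fin n, J p.succ 0 = 0 := fun p => by
        have := hJcol p.succ
        simpa [he0, Fin.succ_ne_zero] using this
      set B : Matrix (Fin n) (Fin n) R := Matrix.of (fun p q => J p.succ q.succ) with hBdef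
      set wv : Fin n → R := fun q => J 0 q.succ with hwv
      have hBB : B * B = 1 := by
        ext p q
        have h1 : (J * J) p.succ q.succ = (1 : Matrix (Fin (n+1)) (Fin (n+1)) R) p.succ q.succ := by
          rw [hJJ]
        rw [Matrix.mul_apply, Fin.sum_univ_succ, hJs0 p, zero_mul, zero_add] at h1
        rw [Matrix.mul_apply]
        calc ∑ k, B p k * B k q = ∑ k : Fin n, J p.succ k.succ * J k.succ q.succ :=
              Finset.sum_congr rfl fun k _ => by simp [hBdef]
          _ = (1 : Matrix (Fin (n+1)) (Fin (n+1)) R) p.succ q.succ := h1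
          _ = (1 : Matrix (Fin n) (Fin n) R) p q := by
              simp [Matrix.one_apply, Fin.succ_inj]
      have hwB : ∀ q, ∑ k, wv k * B k q = -(ε * wv q) := by
        intro q
        have h1 : (J * J) 0 q.succ = 0 := by
          rw [hJJ]
          simp [Matrix.one_apply, hz q]
        rw [Matrix.mul_apply, Fin.sum_univ_succ, hJ00] at h1
        have h2 : ∑ k : Fin n, J 0 k.succ * J k.succ q.succ = -(ε * J 0 q.succ) :=
          eq_neg_of_add_eq_zero_right h1
        exact h2
      set x : Fin n → R := fun q => -(ε * (half * wv q)) with hx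
      have hkey : ∀ q, wv q + ε * x q = half * wv q := by
        intro q
        have h1 : ε * x q = -(half * wv q) := by
          rw [hx]
          simp only
          rw [mul_neg, ← mul_assoc, hε2, one_mul]
        rw [h1]
        have h2 : half * wv q + half * wv q = wv q := by rw [← add_mul, hhh, one_mul]
        nth_rewrite 1 [← h2]
        abel
      have hkey2 : ∀ q, ∑ q', x q' * B q' q = half * wv q := by
        intro q
        have h1 : ∀ q', x q' * B q' q = -(ε * (half * (wv q' * B q' q))) := by
          intro q'
          rw [hx]
          simp only
          rw [neg_mul, mul_assoc, mul_assoc]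
        rw [Finset.sum_congr rfl fun q' _ => h1 q']
        rw [Finset.sum_neg_distrib, ← Finset.mul_sum, ← Finset.mul_sum, hwB q,
          mul_neg, mul_neg, neg_neg]
        rw [← mul_assoc half ε, (hhc ε).eq, mul_assoc ε half, ← mul_assoc ε ε, hε2, one_mul]
      have hJt : J * (EdUnit x).val = (EdUnit x).val * liftM ε B := by
        ext i j
        show (J * (1 + Ed x)) i j = ((1 + Ed x) * liftM ε B) i j
        rw [mul_add, mul_one, add_mul, one_mul, Matrix.add_apply, Matrix.add_apply, mul_Ed]
        induction i using Fin.cases with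
        | zero =>
          induction j using Fin.cases with
          | zero =>
            rw [Ed_mul_zero]
            simp [hJ00]
          | succ q =>
            rw [Ed_mul_zero]
            have hL : J 0 q.succ + J 0 0 * Ed x 0 q.succ = half * wv q := by
              rw [hJ00, Ed_zero_succ]
              exact hkey q
            rw [hL, liftM_zero_succ]
            rw [show (∑ q', x q' * liftM ε B q'.succ q.succ) = ∑ q', x q' * B q' q from
              Finset.sum_congr rfl fun q' _ => by rw [liftM_succ_succ]]
            rw [hkey2 q, zero_add]
        | succ p =>
          induction j using Fin.cases with
          | zero =>
            rw [Ed_mul_succ]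
            simp [hJs0 p]
          | succ q =>
            rw [Ed_mul_succ]
            simp [hJs0 p, hBdef]
      have hJconj : Units.val (EdUnit x)⁻¹ * J * Units.val (EdUnit x) = liftM ε B := by
        rw [mul_assoc, hJt, ← mul_assoc, Units.inv_mul, one_mul]
      obtain ⟨gB, dB, hdB, hgBconj⟩ := ih B hBB
      set GB : (Matrix (Fin (n+1)) (Fin (n+1)) R)ˣ :=
        ⟨liftM 1 (Units.val gB), liftM 1 (Units.val gB⁻¹),
         by rw [liftM_mul, gB.mul_inv, one_mul, liftM_one],
         by rw [liftM_mul, gB.inv_mul, one_mul, liftM_one]⟩ with hGB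
      refine ⟨GB * (EdUnit x)⁻¹ * g⁻¹, Fin.cons ε dB, ?_, ?_⟩
      · intro i
        refine Fin.cases ?_ (fun p => ?_) i
        · simpa using hεpm
        · simpa using hdB p
      · have hexp : Units.val (GB * (EdUnit x)⁻¹ * g⁻¹) * I * Units.val (GB * (EdUnit x)⁻¹ * g⁻¹)⁻¹
            = Units.val GB * (Units.val (EdUnit x)⁻¹ * (Units.val g⁻¹ * I * Units.val g) *
              Units.val (EdUnit x)) * Units.val GB⁻¹ := by
          rw [_root_.mul_inv_rev, _root_.mul_inv_rev, inv_inv, inv_inv]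
          simp only [Units.val_mul]
          simp only [mul_assoc]
        rw [hexp, ← hJdef, hJconj]
        have hGBinv : Units.val GB⁻¹ = liftM 1 (Units.val gB⁻¹) := rfl
        have hGBval : Units.val GB = liftM 1 (Units.val gB) := rfl
        rw [hGBinv, hGBval, liftM_mul, liftM_mul, one_mul, mul_one, hgBconj, liftM_diagonal]

lemma sort_pm {R : Type*} [Ring R] (hne : (1:R) ≠ -1) {n : ℕ} (d : Fin n → R)
    (hd : ∀ i, d i = 1 ∨ d i = -1) :
    ∃ (t : ℕ) (e : Fin n ≃ Fin n), t ≤ n ∧ ∀ i : Fin n,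
      d (e i) = if (i : ℕ) < t then (1:R) else -1 := by
  classical
  set p : Fin n → Prop := fun i => d i = 1 with hp
  set t := Fintype.card {i // p i} with ht
  have htn : t ≤ n := by
    have := Fintype.card_subtype_le p
    simpa using this
  set q : Fin n → Prop := fun i => (i : ℕ) < t with hq
  have hcq : Fintype.card {i : Fin n // q i} = t := by
    have heq : {i : Fin n // q i} ≃ Fin t :=
      { toFun := fun i => ⟨(i.1 : ℕ), i.2⟩
        invFun := fun j => ⟨⟨(j : ℕ), lt_of_lt_of_le j.2 htn⟩, j.2⟩
        left_inv := fun i => by ext; simp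
        right_inv := fun j => by ext; simp }
    rw [Fintype.card_congr heq, Fintype.card_fin]
  have e1 : {i : Fin n // q i} ≃ {i : Fin n // p i} := Fintype.equivOfCardEq (by rw [hcq])
  have e2 : {i : Fin n // ¬ q i} ≃ {i : Fin n // ¬ p i} := Fintype.equivOfCardEq (by
    rw [Fintype.card_subtype_compl, Fintype.card_subtype_compl, hcq])
  refine ⟨t, (Equiv.sumCompl q).symm.trans ((e1.sumCongr e2).trans (Equiv.sumCompl p)), htn, ?_⟩
  intro i
  by_cases hi : q i
  · rw [if_pos hi]
    have h1 : (Equiv.sumCompl q).symm i = Sum.inl ⟨i, hi⟩ :=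
      Equiv.sumCompl_symm_apply_of_pos hi
    simp only [Equiv.trans_apply, h1, Equiv.sumCongr_apply, Sum.map_inl,
      Equiv.sumCompl_apply_inl]
    exact (e1 ⟨i, hi⟩).2
  · rw [if_neg hi]
    have h1 : (Equiv.sumCompl q).symm i = Sum.inr ⟨i, hi⟩ :=
      Equiv.sumCompl_symm_apply_of_neg hi
    simp only [Equiv.trans_apply, h1, Equiv.sumCongr_apply, Sum.map_inr,
      Equiv.sumCompl_apply_inr]
    rcases hd ↑(e2 ⟨i, hi⟩) with h | h
    · exact absurd h (e2 ⟨i, hi⟩).2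
    · exact h

lemma perm_conj {R : Type*} [Ring R] {n : ℕ} (d : Fin n → R) (e : Fin n ≃ Fin n) :
    ∃ π : (Matrix (Fin n) (Fin n) R)ˣ,
      Units.val π * Matrix.diagonal d * Units.val π⁻¹ = Matrix.diagonal (fun i => d (e i)) := by
  classical
  set P : Matrix (Fin n) (Fin n) R := (1 : Matrix (Fin n) (Fin n) R).submatrix ⇑e ⇑(Equiv.refl (Fin n)) with hP
  set Q : Matrix (Fin n) (Fin n) R := (1 : Matrix (Fin n) (Fin n) R).submatrix ⇑(Equiv.refl (Fin n)) ⇑e with hQ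
  have hPQ : P * Q = 1 := by
    rw [hP, hQ, Matrix.submatrix_mul_equiv, one_mul, Matrix.submatrix_one_equiv]
  have hQP : Q * P = 1 := by
    rw [hP, hQ, Matrix.submatrix_mul_equiv, one_mul, Matrix.submatrix_one_equiv]
  refine ⟨⟨P, Q, hPQ, hQP⟩, ?_⟩
  have hDQ : Matrix.diagonal d * Q = (Matrix.diagonal d).submatrix ⇑(Equiv.refl (Fin n)) ⇑e := by
    have h := Matrix.submatrix_mul_equiv (Matrix.diagonal d) (1 : Matrix (Fin n) (Fin n) R)
      ⇑(Equiv.refl (Fin n)) (Equiv.refl (Fin n)) ⇑e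
    rw [mul_one] at h
    rw [hQ, ← h]
    simp
  have hfinal : P * ((Matrix.diagonal d).submatrix ⇑(Equiv.refl (Fin n)) ⇑e)
      = (Matrix.diagonal d).submatrix ⇑e ⇑e := by
    have h := Matrix.submatrix_mul_equiv (1 : Matrix (Fin n) (Fin n) R) (Matrix.diagonal d)
      ⇑e (Equiv.refl (Fin n)) ⇑e
    rw [one_mul] at h
    rw [hP, h]
  show P * Matrix.diagonal d * Q = _
  rw [mul_assoc, hDQ, hfinal, Matrix.submatrix_diagonal_equiv]
  rfl

end Stmt4Aux

theorem stmt_4 (R : Type*) [Ring R] [Nontrivial R] [IsLocalRing R] (h2 : IsUnit (2 : R))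
    (n : ℕ) (I : (Matrix (Fin n) (Fin n) R)ˣ) (hI : I ^ 2 = 1) :
    ∃ g : (Matrix (Fin n) (Fin n) R)ˣ, ∃ t : ℕ, t ≤ n ∧
      Units.val (g * I * g⁻¹) =
        Matrix.diagonal (fun i : Fin n => if (i : ℕ) < t then (1 : R) else -1) := by
  have hII : (Units.val I) * Units.val I = 1 := by
    have h := congrArg Units.val hI
    rwa [sq, Units.val_mul, Units.val_one] at h
  obtain ⟨g0, d, hd, hconj⟩ := Stmt4Aux.key h2 n (Units.val I) hII
  have hne : (1 : R) ≠ -1 := by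
    intro h
    have h20 : (2 : R) = 0 := by
      rw [← one_add_one_eq_two]
      nth_rewrite 2 [h]
      simp
    rw [h20] at h2
    exact not_isUnit_zero h2
  obtain ⟨t, e, htn, hsorted⟩ := Stmt4Aux.sort_pm hne d hd
  obtain ⟨π, hπ⟩ := Stmt4Aux.perm_conj d e
  refine ⟨π * g0, t, htn, ?_⟩
  have hval : Units.val (π * g0 * I * (π * g0)⁻¹)
      = Units.val π * (Units.val g0 * Units.val I * Units.val g0⁻¹) * Units.val π⁻¹ := by
    rw [_root_.mul_inv_rev]
    simp only [Units.val_mul]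
    simp only [mul_assoc]
  rw [hval, hconj, hπ]
  exact congrArg Matrix.diagonal (funext hsorted)
end

section
/- Let R be a local ring with 1/2 and let I₁, I₂ ∈ GL_n(R) be commuting involutions (I₁² = I₂² = E, I₁I₂ = I₂I₁). Then there is a single matrix g ∈ GL_n(R) such that both g I₁ g⁻¹ and g I₂ g⁻¹ are diagonal matrices with entries ±1. -/
open Matrix
set_option linter.unusedSectionVars false
set_option maxHeartbeats 1000000

section
variable {R : Type*} [Ring R] [IsLocalRing R]

-- nonunits closed under addition, noncommutative local ring
theorem myNonunitsAdd {a b : R} (ha : ¬ IsUnit a) (hb : ¬ IsUnit b) : ¬ IsUnit (a + b) := by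
  rintro ⟨u, hu⟩
  have h1 : (↑u⁻¹ : R) * a + (↑u⁻¹ : R) * b = 1 := by
    rw [← mul_add, ← hu, Units.inv_mul]
  rcases IsLocalRing.isUnit_or_isUnit_of_add_one h1 with h | h
  · exact ha (by simpa [mul_assoc] using (u.isUnit.mul h))
  · exact hb (by simpa [mul_assoc] using (u.isUnit.mul h))

theorem add4units {a b c d : R} (h : a + b + c + d = 1) :
    IsUnit a ∨ IsUnit b ∨ IsUnit c ∨ IsUnit d := by
  by_contra hcon
  push_neg at hcon
  obtain ⟨ha, hb, hc, hd⟩ := hcon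
  exact (myNonunitsAdd (myNonunitsAdd (myNonunitsAdd ha hb) hc) hd) (h ▸ isUnit_one)
end


open Matrix
section
variable {R : Type*} [Ring R] {n : ℕ}

/-- extend a matrix by a corner entry -/
def mext (a : R) (x : Matrix (Fin n) (Fin n) R) : Matrix (Fin (n+1)) (Fin (n+1)) R :=
  Matrix.of (Fin.cons (Fin.cons a 0) (fun i => Fin.cons 0 (x i)))

@[simp] lemma mext_00 (a : R) (x : Matrix (Fin n) (Fin n) R) : mext a x 0 0 = a := rfl
@[simp] lemma mext_0s (a : R) (x : Matrix (Fin n) (Fin n) R) (j : Fin n) :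
    mext a x 0 j.succ = 0 := rfl
@[simp] lemma mext_s0 (a : R) (x : Matrix (Fin n) (Fin n) R) (i : Fin n) :
    mext a x i.succ 0 = 0 := by simp [mext]
@[simp] lemma mext_ss (a : R) (x : Matrix (Fin n) (Fin n) R) (i j : Fin n) :
    mext a x i.succ j.succ = x i j := by simp [mext]

lemma mext_mul (a b : R) (x y : Matrix (Fin n) (Fin n) R) :
    mext a x * mext b y = mext (a * b) (x * y) := by
  ext i j
  refine Fin.cases ?_ (fun i => ?_) i <;> refine Fin.cases ?_ (fun j => ?_) j <;>
    simp [Matrix.mul_apply, Fin.sum_univ_succ]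

lemma mext_one : (mext 1 1 : Matrix (Fin (n+1)) (Fin (n+1)) R) = 1 := by
  ext i j
  refine Fin.cases ?_ (fun i => ?_) i <;> refine Fin.cases ?_ (fun j => ?_) j <;>
    simp [Matrix.one_apply, Fin.succ_ne_zero, (Fin.succ_ne_zero _).symm, Fin.succ_inj]

lemma mext_diagonal (a : R) (d : Fin n → R) :
    mext a (Matrix.diagonal d) = Matrix.diagonal (Fin.cons a d) := by
  ext i j
  refine Fin.cases ?_ (fun i => ?_) i <;> refine Fin.cases ?_ (fun j => ?_) j <;>
    simp [Matrix.diagonal_apply, Fin.succ_ne_zero, (Fin.succ_ne_zero _).symm, Fin.succ_inj]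

-- a matrix with prescribed row-0/col-0 equals mext of its lower block
lemma eq_mext (J : Matrix (Fin (n+1)) (Fin (n+1)) R) (a : R)
    (hrow : ∀ j, J 0 j = if j = 0 then a else 0)
    (hcol : ∀ i, J i 0 = if i = 0 then a else 0) :
    J = mext a (fun i j => J i.succ j.succ) := by
  ext i j
  refine Fin.cases ?_ (fun i => ?_) i <;> refine Fin.cases ?_ (fun j => ?_) j <;>
    simp [hrow, hcol, Fin.succ_ne_zero, mext]
end

open Matrix
set_option linter.unusedSectionVars false
set_option maxHeartbeats 1000000

section
variable {R : Type*} [Ring R] {m : Type*} [Fintype m] [DecidableEq m]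

lemma vmv_mul_vmv (c r c' r' : m → R) :
    vecMulVec c r * vecMulVec c' r' = vecMulVec (fun i => c i * (r ⬝ᵥ c')) r' := by
  ext i j
  simp only [Matrix.mul_apply, vecMulVec_apply, dotProduct, Finset.mul_sum, Finset.sum_mul]
  refine Finset.sum_congr rfl fun k _ => by rw [mul_assoc, mul_assoc, mul_assoc]

lemma vmv_mulVec (c r x : m → R) : vecMulVec c r *ᵥ x = fun i => c i * (r ⬝ᵥ x) := by
  funext i
  simp only [Matrix.mulVec, dotProduct, vecMulVec_apply, Finset.mul_sum]
  refine Finset.sum_congr rfl fun k _ => by rw [mul_assoc]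

lemma vecMul_vmv (x c r : m → R) : x ᵥ* vecMulVec c r = (x ⬝ᵥ c) • r := by
  funext j
  simp only [Matrix.vecMul, dotProduct, vecMulVec_apply, Pi.smul_apply, smul_eq_mul,
    Finset.sum_mul]
  refine Finset.sum_congr rfl fun k _ => by rw [mul_assoc]

lemma rank1_inv (c r : m → R) (x : Rˣ) (hx : r ⬝ᵥ c = ↑x - 1) :
    (1 + vecMulVec c r) * (1 - vecMulVec (fun i => c i * ↑x⁻¹) r) = 1 ∧
    (1 - vecMulVec (fun i => c i * ↑x⁻¹) r) * (1 + vecMulVec c r) = 1 := by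
  have hd : r ⬝ᵥ (fun i => c i * ↑x⁻¹) = 1 - (↑x⁻¹ : R) := by
    simp only [dotProduct] at hx ⊢
    have : ∑ i, r i * (c i * ↑x⁻¹) = (∑ i, r i * c i) * ↑x⁻¹ := by
      rw [Finset.sum_mul]; exact Finset.sum_congr rfl fun k _ => (mul_assoc _ _ _).symm
    rw [this, hx, sub_mul, Units.mul_inv, one_mul]
  have key1 : vecMulVec c r * vecMulVec (fun i => c i * ↑x⁻¹) r
      = vecMulVec c r - vecMulVec (fun i => c i * ↑x⁻¹) r := by
    rw [vmv_mul_vmv]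
    ext i j
    simp only [vecMulVec_apply, Matrix.sub_apply, hd, mul_sub, mul_one, sub_mul]
  have key2 : vecMulVec (fun i => c i * ↑x⁻¹) r * vecMulVec c r
      = vecMulVec c r - vecMulVec (fun i => c i * ↑x⁻¹) r := by
    rw [vmv_mul_vmv]
    ext i j
    simp only [vecMulVec_apply, Matrix.sub_apply, hx, mul_sub, sub_mul, mul_assoc,
      Units.inv_mul, mul_one]
  constructor
  · rw [mul_sub, add_mul, add_mul, key1]; noncomm_ring
  · rw [sub_mul, mul_add, mul_add, key2]; noncomm_ring

lemma mulVec_smulfun (M : Matrix m m R) (c : R) (hc : ∀ x : R, c * x = x * c) (x : m → R) :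
    M *ᵥ (fun i => c * x i) = fun i => c * (M *ᵥ x) i := by
  funext i
  simp only [Matrix.mulVec, dotProduct, Finset.mul_sum]
  exact Finset.sum_congr rfl fun k _ => by rw [← mul_assoc, ← hc, mul_assoc]

lemma smulfun_vecMul (c : R) (x : m → R) (M : Matrix m m R) :
    (fun i => c * x i) ᵥ* M = fun j => c * (x ᵥ* M) j := by
  funext j
  simp only [Matrix.vecMul, dotProduct, Finset.mul_sum]
  exact Finset.sum_congr rfl fun k _ => by rw [mul_assoc]
end

section
variable {R : Type*} [Ring R] {n : ℕ}
local notation "MM" => Matrix (Fin (n+1)) (Fin (n+1)) R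

lemma split (S e : MM) (a : R) (hac : ∀ x : R, a * x = x * a)
    (he : e * e = e) (heS : S * e = a • e) (heS' : e * S = a • e)
    (hu : IsUnit (e 0 0)) :
    ∃ g g' : MM, g * g' = 1 ∧ g' * g = 1 ∧
      (∀ T : MM, ∀ b : R, (∀ x : R, b * x = x * b) → T * e = b • e → e * T = b • e →
        (∀ i, (g' * T * g) i 0 = if i = 0 then b else 0) ∧
        (∀ j, (g' * T * g) 0 j = if j = 0 then b else 0)) := by
  classical
  set u : Rˣ := hu.unit with hu'
  have hu0 : e 0 0 = ↑u := (IsUnit.unit_spec hu).symm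
  set v : Fin (n+1) → R := fun i => e i 0 with hv
  set w : Fin (n+1) → R := fun j => e 0 j with hw
  set d0 : Fin (n+1) → R := Pi.single (0 : Fin (n+1)) (1:R) with hd0
  have hd00 : d0 0 = 1 := by simp [hd0]
  have hd0s : ∀ i : Fin n, d0 i.succ = 0 := fun i => by
    simp [hd0, Pi.single_apply, (Fin.succ_ne_zero i)]
  have hwv : w ⬝ᵥ v = ↑u := by
    have := congrFun (congrFun he 0) 0
    rw [Matrix.mul_apply] at this
    rw [← hu0]; exact this
  -- first factor
  set cA : Fin (n+1) → R := fun i => v i - d0 i with hcA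
  have hdA : d0 ⬝ᵥ cA = ↑u - 1 := by
    rw [hd0, single_dotProduct, one_mul, hcA]
    simp [hv, hu0, hd00]
  obtain ⟨hA1, hA2⟩ := rank1_inv cA d0 u hdA
  set gA : MM := 1 + vecMulVec cA d0 with hgA
  set gA' : MM := 1 - vecMulVec (fun i => cA i * ↑u⁻¹) d0 with hgA'
  set rB : Fin (n+1) → R := fun j => if j = 0 then 0 else -(↑u⁻¹ * w j) with hrB
  have hrB0 : rB 0 = 0 := by simp [hrB]
  have hrBs : ∀ i : Fin n, rB i.succ = -(↑u⁻¹ * w i.succ) := fun i => by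
    simp [hrB, Fin.succ_ne_zero]
  have hdB : rB ⬝ᵥ d0 = ↑(1:Rˣ) - 1 := by
    rw [hd0, dotProduct_single, hrB0, zero_mul]
    simp
  obtain ⟨hB1, hB2⟩ := rank1_inv d0 rB 1 hdB
  rw [show (fun i => d0 i * ↑(1:Rˣ)⁻¹) = d0 by funext i; simp] at hB1 hB2
  set gB : MM := 1 + vecMulVec d0 rB with hgB
  set gB' : MM := 1 - vecMulVec d0 rB with hgB'
  refine ⟨gA * gB, gB' * gA', ?_, ?_, ?_⟩
  · calc gA * gB * (gB' * gA') = gA * (gB * gB') * gA' := by noncomm_ring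
      _ = 1 := by rw [hB1, mul_one, hA1]
  · calc gB' * gA' * (gA * gB) = gB' * (gA' * gA) * gB := by noncomm_ring
      _ = 1 := by rw [hA2, mul_one, hB2]
  set g : MM := gA * gB with hg
  set g' : MM := gB' * gA' with hg'
  have hgg' : g * g' = 1 := by
    calc gA * gB * (gB' * gA') = gA * (gB * gB') * gA' := by noncomm_ring
      _ = 1 := by rw [hB1, mul_one, hA1]
  have hg'g : g' * g = 1 := by
    calc gB' * gA' * (gA * gB) = gB' * (gA' * gA) * gB := by noncomm_ring
      _ = 1 := by rw [hA2, mul_one, hB2]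
  have hd0d0 : d0 ⬝ᵥ d0 = 1 := by
    rw [hd0, single_dotProduct, one_mul]
    simp
  have hrBd0 : rB ⬝ᵥ d0 = 0 := by simpa using hdB
  -- the column of g
  have hgcol : g *ᵥ d0 = v := by
    have h1 : gB *ᵥ d0 = d0 := by
      rw [hgB, Matrix.add_mulVec, Matrix.one_mulVec, vmv_mulVec]
      funext i
      simp [hrBd0]
    have h2 : gA *ᵥ d0 = v := by
      rw [hgA, Matrix.add_mulVec, Matrix.one_mulVec, vmv_mulVec]
      funext i
      simp [hd0d0, hcA]
    rw [hg, ← Matrix.mulVec_mulVec, h1, h2]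
  -- the row of g'
  have hwsum : ∑ k : Fin n, w k.succ * v k.succ = ↑u - ↑u * ↑u := by
    have := hwv
    rw [show w ⬝ᵥ v = ∑ k, w k * v k from rfl, Fin.sum_univ_succ] at this
    have hw0 : w 0 = ↑u := hu0
    have hv0 : v 0 = ↑u := hu0
    rw [hw0, hv0] at this
    exact eq_sub_of_add_eq' this
  have hz : (d0 - rB) ⬝ᵥ (fun i => cA i * ↑u⁻¹) = 0 := by
    rw [show (d0 - rB) ⬝ᵥ (fun i => cA i * ↑u⁻¹)
        = ∑ j, (d0 j - rB j) * (cA j * ↑u⁻¹) from rfl, Fin.sum_univ_succ]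
    have hterm0 : (d0 0 - rB 0) * (cA 0 * ↑u⁻¹) = (↑u - 1) * ↑u⁻¹ := by
      rw [hd00, hrB0, sub_zero, one_mul, hcA]
      simp only [hd00]
      rw [show v 0 = (↑u:R) from hu0]
    have hterms : ∀ i : Fin n, (d0 i.succ - rB i.succ) * (cA i.succ * ↑u⁻¹)
        = ↑u⁻¹ * (w i.succ * v i.succ) * ↑u⁻¹ := fun i => by
      rw [hd0s, hrBs, hcA]
      simp only [hd0s, sub_zero, zero_sub, neg_neg]
      rw [← mul_assoc, mul_assoc (↑u⁻¹ : R) (w i.succ) (v i.succ)]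
    rw [hterm0, Finset.sum_congr rfl fun i _ => hterms i]
    have hsum2 : ∑ i : Fin n, (↑u⁻¹ : R) * (w i.succ * v i.succ) * ↑u⁻¹
        = ↑u⁻¹ * (↑u - ↑u * ↑u) * ↑u⁻¹ := by
      rw [← hwsum, Finset.mul_sum, Finset.sum_mul]
    rw [hsum2]
    have : (↑u⁻¹ : R) * (↑u - ↑u * ↑u) = 1 - ↑u := by
      rw [mul_sub, Units.inv_mul, ← mul_assoc, Units.inv_mul, one_mul]
    rw [this]
    noncomm_ring
  have hrow : d0 ᵥ* g' = fun j => ↑u⁻¹ * w j := by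
    have h1 : d0 ᵥ* gB' = d0 - rB := by
      rw [hgB', Matrix.vecMul_sub, Matrix.vecMul_one, vecMul_vmv, hd0d0, one_smul]
    have h2 : (d0 - rB) ᵥ* gA' = d0 - rB := by
      rw [hgA', Matrix.vecMul_sub, Matrix.vecMul_one, vecMul_vmv, hz, zero_smul, sub_zero]
    have hcomp : d0 ᵥ* g' = (d0 ᵥ* gB') ᵥ* gA' := by
      rw [hg', Matrix.vecMul_vecMul]
    rw [hcomp, h1, h2]
    funext j
    refine Fin.cases ?_ (fun j => ?_) j
    · simp only [Pi.sub_apply, hd00, hrB0, sub_zero]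
      rw [show w 0 = (↑u:R) from hu0, Units.inv_mul]
    · simp only [Pi.sub_apply, hd0s, hrBs, zero_sub, neg_neg]
  -- now the generic commuting matrix T
  intro T b hbc hTe heT'
  have hTv : T *ᵥ v = fun i => b * v i := by
    funext i
    have h1 : (T *ᵥ v) i = (T * e) i 0 := by
      rw [Matrix.mul_apply]; rfl
    rw [h1, hTe, Matrix.smul_apply, smul_eq_mul]
  have hwT : w ᵥ* T = fun j => b * w j := by
    funext j
    have h1 : (w ᵥ* T) j = (e * T) 0 j := by
      rw [Matrix.mul_apply]; rfl
    rw [h1, heT', Matrix.smul_apply, smul_eq_mul]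
  have hcol : (g' * T * g) *ᵥ d0 = fun i => b * d0 i := by
    have h1 : (g' * T * g) *ᵥ d0 = g' *ᵥ (T *ᵥ (g *ᵥ d0)) := by
      rw [← Matrix.mulVec_mulVec, ← Matrix.mulVec_mulVec]
    rw [h1, hgcol, hTv, mulVec_smulfun g' b hbc v]
    have h2 : g' *ᵥ v = d0 := by
      rw [← hgcol, Matrix.mulVec_mulVec, hg'g, Matrix.one_mulVec]
    rw [h2]
  have hrowT : d0 ᵥ* (g' * T * g) = fun j => b * d0 j := by
    have h1 : d0 ᵥ* (g' * T * g) = ((d0 ᵥ* g') ᵥ* T) ᵥ* g := by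
      rw [Matrix.vecMul_vecMul, Matrix.vecMul_vecMul, mul_assoc g' T g]
    rw [h1, hrow, smulfun_vecMul (↑u⁻¹ : R) w T, hwT]
    have h2 : (fun j => (↑u⁻¹:R) * (b * w j)) = fun j => b * ((↑u⁻¹:R) * w j) := by
      funext j
      rw [← mul_assoc, ← hbc, mul_assoc]
    rw [h2, smulfun_vecMul b (fun j => (↑u⁻¹:R) * w j) g, ← hrow,
      Matrix.vecMul_vecMul, hg'g, Matrix.vecMul_one]
  constructor
  · intro i
    have h1 : (g' * T * g) i 0 = ((g' * T * g) *ᵥ d0) i := by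
      rw [hd0, Matrix.mulVec_single]
      simp
    rw [h1, hcol]
    by_cases hi : i = 0
    · subst hi; simp [hd00]
    · have : d0 i = 0 := by simp [hd0, Pi.single_apply, hi]
      simp [this, hi]
  · intro j
    have h1 : (g' * T * g) 0 j = (d0 ᵥ* (g' * T * g)) j := by
      rw [hd0, Matrix.single_vecMul]
      simp
    rw [h1, hrowT]
    by_cases hj : j = 0
    · subst hj; simp [hd00]
    · have : d0 j = 0 := by simp [hd0, Pi.single_apply, hj]
      simp [this, hj]
end

open Matrix
set_option linter.unusedSectionVars false
set_option maxHeartbeats 1000000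
section
variable {R : Type*} [Ring R] {n : ℕ}

local notation "MM" => Matrix (Fin n) (Fin n) R

lemma mul_smul_central (r : R) (hr : ∀ x : R, r * x = x * r) (X Y : MM) :
    X * (r • Y) = r • (X * Y) := by
  ext i j
  simp only [Matrix.mul_apply, Matrix.smul_apply, smul_eq_mul, Finset.mul_sum]
  exact Finset.sum_congr rfl fun k _ => by rw [← mul_assoc, ← hr, mul_assoc]

lemma mk_idem (S T : MM) (hS : S * S = 1) (hT : T * T = 1) (hST : S * T = T * S)
    (a b : R) (ha1 : a * a = 1) (hac : ∀ x : R, a * x = x * a)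
    (hb1 : b * b = 1) (hbc : ∀ x : R, b * x = x * b)
    (s : R) (hsc : ∀ x : R, s * x = x * s) (hs4 : s * 4 = 1)
    (e : MM) (he : e = s • ((1 + a • S) * (1 + b • T))) :
    e * e = e ∧ S * e = a • e ∧ e * S = a • e ∧ T * e = b • e ∧ e * T = b • e := by
  set P : MM := 1 + a • S with hP
  set Q : MM := 1 + b • T with hQ
  have hSP : S * P = a • P := by
    rw [hP]
    simp only [mul_add, add_mul, mul_one, one_mul, mul_smul_central a hac,
      Matrix.smul_mul, hS, smul_add, smul_smul, ha1, one_smul]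
    abel
  have hPS : P * S = a • P := by
    rw [hP]
    simp only [mul_add, add_mul, mul_one, one_mul, Matrix.smul_mul, hS,
      smul_add, smul_smul, ha1, one_smul]
    abel
  have hTQ : T * Q = b • Q := by
    rw [hQ]
    simp only [mul_add, add_mul, mul_one, one_mul, mul_smul_central b hbc,
      Matrix.smul_mul, hT, smul_add, smul_smul, hb1, one_smul]
    abel
  have hQT : Q * T = b • Q := by
    rw [hQ]
    simp only [mul_add, add_mul, mul_one, one_mul, Matrix.smul_mul, hT,
      smul_add, smul_smul, hb1, one_smul]
    abel
  have hSQ : S * Q = Q * S := by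
    rw [hQ]
    simp only [mul_add, add_mul, mul_one, one_mul, mul_smul_central b hbc,
      Matrix.smul_mul, hST]
  have hPQ : P * Q = Q * P := by
    rw [hP]
    simp only [mul_add, add_mul, mul_one, one_mul, Matrix.smul_mul,
      mul_smul_central a hac, hSQ]
  have hPP : P * P = P + P := by
    conv_lhs => rw [hP]
    simp only [mul_add, add_mul, mul_one, one_mul, Matrix.smul_mul,
      mul_smul_central a hac, hS, smul_add, smul_smul, ha1, one_smul, hP]
    abel
  have hQQ : Q * Q = Q + Q := by
    conv_lhs => rw [hQ]
    simp only [mul_add, add_mul, mul_one, one_mul, Matrix.smul_mul,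
      mul_smul_central b hbc, hT, smul_add, smul_smul, hb1, one_smul, hQ]
    abel
  have hss : s * s + s * s + s * s + s * s = s := by
    calc s * s + s * s + s * s + s * s = s * s * 4 := by noncomm_ring
      _ = s := by rw [mul_assoc, hs4, mul_one]
  have hee : e * e = e := by
    rw [he, Matrix.smul_mul, mul_smul_central s hsc, smul_smul]
    have hX : (P * Q) * (P * Q) = P * Q + P * Q + P * Q + P * Q := by
      calc (P * Q) * (P * Q) = P * ((Q * P) * Q) := by noncomm_ring
        _ = P * ((P * Q) * Q) := by rw [hPQ]
        _ = (P * P) * (Q * Q) := by noncomm_ring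
        _ = (P + P) * (Q + Q) := by rw [hPP, hQQ]
        _ = P * Q + P * Q + P * Q + P * Q := by noncomm_ring
    rw [hX, smul_add, smul_add, smul_add, ← add_smul, ← add_smul, ← add_smul, hss]
  have hTP : T * P = P * T := by
    rw [hP]
    simp only [mul_add, add_mul, mul_one, one_mul, mul_smul_central a hac,
      Matrix.smul_mul, hST]
  refine ⟨hee, ?_, ?_, ?_, ?_⟩
  · rw [he, mul_smul_central s hsc, ← mul_assoc, hSP, Matrix.smul_mul, smul_smul, hsc a,
      ← smul_smul, ← he]
  · have h3 : (P * Q) * S = a • (P * Q) := by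
      rw [mul_assoc, ← hSQ, ← mul_assoc, hPS, Matrix.smul_mul]
    rw [he, Matrix.smul_mul, h3, smul_smul, hsc a, ← smul_smul, ← he]
  · have h4 : T * (P * Q) = b • (P * Q) := by
      rw [← mul_assoc, hTP, mul_assoc, hTQ, mul_smul_central b hbc]
    rw [he, mul_smul_central s hsc, h4, smul_smul, hsc b, ← smul_smul, ← he]
  · have h5 : (P * Q) * T = b • (P * Q) := by
      rw [mul_assoc, hQT, mul_smul_central b hbc]
    rw [he, Matrix.smul_mul, h5, smul_smul, hsc b, ← smul_smul, ← he]
end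

set_option linter.unusedSectionVars false
section
variable {R : Type*} [Ring R] [IsLocalRing R]

lemma inv2_central (h2 : IsUnit (2:R)) (x : R) :
    (↑h2.unit⁻¹ : R) * x = x * ↑h2.unit⁻¹ := by
  have hcomm : Commute (↑h2.unit : R) x := by
    rw [IsUnit.unit_spec, show (2:R) = 1 + 1 by norm_num]
    exact (Commute.one_left x).add_left (Commute.one_left x)
  exact hcomm.units_inv_left

variable {n : ℕ}
local notation "MM" => Matrix (Fin (n+1)) (Fin (n+1)) R

lemma quad (h2 : IsUnit (2:R)) (S T : MM) (hS : S * S = 1) (hT : T * T = 1)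
    (hST : S * T = T * S)
    (mk : ∀ (a b : R), a * a = 1 → (∀ x : R, a * x = x * a) →
      b * b = 1 → (∀ x : R, b * x = x * b) →
      ∀ (s : R), (∀ x : R, s * x = x * s) → s * 4 = 1 →
      ∀ (e : MM), e = s • ((1 + a • S) * (1 + b • T)) →
      e * e = e ∧ S * e = a • e ∧ e * S = a • e ∧ T * e = b • e ∧ e * T = b • e) :
    ∃ (a b : R) (e : MM), (a = 1 ∨ a = -1) ∧ (b = 1 ∨ b = -1) ∧
      e * e = e ∧ S * e = a • e ∧ e * S = a • e ∧ T * e = b • e ∧ e * T = b • e ∧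
      IsUnit (e 0 0) := by
  set c : R := ↑h2.unit⁻¹ with hc
  have hcc : ∀ x : R, c * x = x * c := inv2_central h2
  have hc2 : c * 2 = 1 := by
    conv_lhs => rw [show (2:R) = ↑h2.unit from (IsUnit.unit_spec h2).symm]
    exact Units.inv_mul _
  set s : R := c * c with hs
  have hsc : ∀ x : R, s * x = x * s := fun x => by
    rw [hs, mul_assoc, hcc x, ← mul_assoc, hcc x, mul_assoc]
  have hs4 : s * 4 = 1 := by
    rw [show (4:R) = 2 * 2 by norm_num, hs, mul_assoc c c (2*2), ← mul_assoc c 2 2, hc2,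
      one_mul, hc2]
  have hss : s + s + s + s = 1 := by
    calc s + s + s + s = s * 4 := by noncomm_ring
      _ = 1 := hs4
  -- the four idempotents
  set A : MM := (1 + S) * (1 + T) with hA
  set B : MM := (1 + S) * (1 - T) with hB
  set C : MM := (1 - S) * (1 + T) with hC
  set D : MM := (1 - S) * (1 - T) with hD
  have hsum : s • A + s • B + s • C + s • D = (1 : MM) := by
    have h4 : A + B + C + D = 1 + 1 + 1 + 1 := by
      rw [hA, hB, hC, hD]; noncomm_ring
    calc s • A + s • B + s • C + s • D = s • (A + B + C + D) := by
          rw [smul_add, smul_add, smul_add]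
      _ = s • (1 + 1 + 1 + 1 : MM) := by rw [h4]
      _ = s • (1:MM) + s • 1 + s • 1 + s • 1 := by rw [smul_add, smul_add, smul_add]
      _ = (s + s + s + s) • (1:MM) := by rw [add_smul, add_smul, add_smul]
      _ = 1 := by rw [hss, one_smul]
  have hentry : (s • A) 0 0 + (s • B) 0 0 + (s • C) 0 0 + (s • D) 0 0 = 1 := by
    have := congrFun (congrFun hsum 0) 0
    simpa [Matrix.add_apply, Matrix.one_apply] using this
  have one_smul' : ∀ X : MM, (1:R) • X = X := fun X => one_smul R X
  have hone : ((1:R) * (1:R) = 1) := by norm_num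
  have honec : ∀ x : R, (1:R) * x = x * 1 := fun x => by rw [one_mul, mul_one]
  have hneg : ((-1:R) * (-1:R) = 1) := by norm_num
  have hnegc : ∀ x : R, (-1:R) * x = x * (-1:R) := fun x => by
    rw [neg_one_mul, mul_neg_one]
  have eA : A = (1 + (1:R) • S) * (1 + (1:R) • T) := by rw [one_smul, one_smul]
  have eB : B = (1 + (1:R) • S) * (1 + (-1:R) • T) := by
    rw [one_smul, neg_one_smul]; rw [hB, sub_eq_add_neg]
  have eC : C = (1 + (-1:R) • S) * (1 + (1:R) • T) := by
    rw [one_smul, neg_one_smul]; rw [hC, sub_eq_add_neg]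
  have eD : D = (1 + (-1:R) • S) * (1 + (-1:R) • T) := by
    rw [neg_one_smul, neg_one_smul]; rw [hD, sub_eq_add_neg, sub_eq_add_neg]
  rcases add4units hentry with hu | hu | hu | hu
  · exact ⟨1, 1, s • A, Or.inl rfl, Or.inl rfl,
      (mk 1 1 hone honec hone honec s hsc hs4 (s • A) (by rw [eA])).1,
      (mk 1 1 hone honec hone honec s hsc hs4 (s • A) (by rw [eA])).2.1,
      (mk 1 1 hone honec hone honec s hsc hs4 (s • A) (by rw [eA])).2.2.1,
      (mk 1 1 hone honec hone honec s hsc hs4 (s • A) (by rw [eA])).2.2.2.1,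
      (mk 1 1 hone honec hone honec s hsc hs4 (s • A) (by rw [eA])).2.2.2.2, hu⟩
  · exact ⟨1, -1, s • B, Or.inl rfl, Or.inr rfl,
      (mk 1 (-1) hone honec hneg hnegc s hsc hs4 (s • B) (by rw [eB])).1,
      (mk 1 (-1) hone honec hneg hnegc s hsc hs4 (s • B) (by rw [eB])).2.1,
      (mk 1 (-1) hone honec hneg hnegc s hsc hs4 (s • B) (by rw [eB])).2.2.1,
      (mk 1 (-1) hone honec hneg hnegc s hsc hs4 (s • B) (by rw [eB])).2.2.2.1,
      (mk 1 (-1) hone honec hneg hnegc s hsc hs4 (s • B) (by rw [eB])).2.2.2.2, hu⟩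
  · exact ⟨-1, 1, s • C, Or.inr rfl, Or.inl rfl,
      (mk (-1) 1 hneg hnegc hone honec s hsc hs4 (s • C) (by rw [eC])).1,
      (mk (-1) 1 hneg hnegc hone honec s hsc hs4 (s • C) (by rw [eC])).2.1,
      (mk (-1) 1 hneg hnegc hone honec s hsc hs4 (s • C) (by rw [eC])).2.2.1,
      (mk (-1) 1 hneg hnegc hone honec s hsc hs4 (s • C) (by rw [eC])).2.2.2.1,
      (mk (-1) 1 hneg hnegc hone honec s hsc hs4 (s • C) (by rw [eC])).2.2.2.2, hu⟩
  · exact ⟨-1, -1, s • D, Or.inr rfl, Or.inr rfl,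
      (mk (-1) (-1) hneg hnegc hneg hnegc s hsc hs4 (s • D) (by rw [eD])).1,
      (mk (-1) (-1) hneg hnegc hneg hnegc s hsc hs4 (s • D) (by rw [eD])).2.1,
      (mk (-1) (-1) hneg hnegc hneg hnegc s hsc hs4 (s • D) (by rw [eD])).2.2.1,
      (mk (-1) (-1) hneg hnegc hneg hnegc s hsc hs4 (s • D) (by rw [eD])).2.2.2.1,
      (mk (-1) (-1) hneg hnegc hneg hnegc s hsc hs4 (s • D) (by rw [eD])).2.2.2.2, hu⟩
end


section
variable {R : Type*} [Ring R] [IsLocalRing R]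

theorem key_diag (h2 : IsUnit (2:R)) :
    ∀ (n : ℕ) (S T : Matrix (Fin n) (Fin n) R), S * S = 1 → T * T = 1 → S * T = T * S →
    ∃ (g g' : Matrix (Fin n) (Fin n) R) (d₁ d₂ : Fin n → R),
      g * g' = 1 ∧ g' * g = 1 ∧ (∀ i, d₁ i = 1 ∨ d₁ i = -1) ∧ (∀ i, d₂ i = 1 ∨ d₂ i = -1) ∧
      g * S * g' = Matrix.diagonal d₁ ∧ g * T * g' = Matrix.diagonal d₂ := by
  intro n
  induction n with
  | zero =>
    intro S T _ _ _
    refine ⟨1, 1, fun i => i.elim0, fun i => i.elim0, by simp, by simp,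
      fun i => i.elim0, fun i => i.elim0, ?_, ?_⟩ <;> apply Subsingleton.elim
  | succ n ih =>
    intro S T hS hT hST
    obtain ⟨a, b, e, ha, hb, hee, hSe, heS, hTe, heT, hu⟩ :=
      quad h2 S T hS hT hST (fun a b ha hac hb hbc s hsc hs4 e he =>
        mk_idem S T hS hT hST a b ha hac hb hbc s hsc hs4 e he)
    have hac : ∀ x : R, a * x = x * a := by
      rcases ha with h | h <;> subst h <;> intro x
      · rw [one_mul, mul_one]
      · rw [neg_one_mul, mul_neg_one]
    have hbc : ∀ x : R, b * x = x * b := by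
      rcases hb with h | h <;> subst h <;> intro x
      · rw [one_mul, mul_one]
      · rw [neg_one_mul, mul_neg_one]
    obtain ⟨g0, g0', hgg0, hg0g, hblocks⟩ := split S e a hac hee hSe heS hu
    obtain ⟨hScol, hSrow⟩ := hblocks S a hac hSe heS
    obtain ⟨hTcol, hTrow⟩ := hblocks T b hbc hTe heT
    set S' : Matrix (Fin n) (Fin n) R := fun i j => (g0' * S * g0) i.succ j.succ with hS'
    set T' : Matrix (Fin n) (Fin n) R := fun i j => (g0' * T * g0) i.succ j.succ with hT'
    have hJ : g0' * S * g0 = mext a S' := eq_mext _ a hSrow hScol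
    have hK : g0' * T * g0 = mext b T' := eq_mext _ b hTrow hTcol
    have conj : ∀ X Y : Matrix (Fin (n+1)) (Fin (n+1)) R,
        (g0' * X * g0) * (g0' * Y * g0) = g0' * (X * Y) * g0 := by
      intro X Y
      calc (g0' * X * g0) * (g0' * Y * g0) = g0' * X * (g0 * g0') * (Y * g0) := by
            noncomm_ring
        _ = g0' * (X * Y) * g0 := by rw [hgg0]; noncomm_ring
    have hid : g0' * (1:Matrix (Fin (n+1)) (Fin (n+1)) R) * g0 = 1 := by
      rw [mul_one, hg0g]
    have hJJ : mext (a*a) (S' * S') = mext 1 (1 : Matrix (Fin n) (Fin n) R) := by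
      rw [← mext_mul, ← hJ, conj, hS, mext_one, hid]
    have hKK : mext (b*b) (T' * T') = mext 1 (1 : Matrix (Fin n) (Fin n) R) := by
      rw [← mext_mul, ← hK, conj, hT, mext_one, hid]
    have hJK : mext (a*b) (S' * T') = mext (b*a) (T' * S') := by
      rw [← mext_mul, ← mext_mul, ← hJ, ← hK, conj, conj, hST]
    have hS'S' : S' * S' = 1 := by
      ext i j
      have := congrFun (congrFun hJJ i.succ) j.succ
      simpa using this
    have hT'T' : T' * T' = 1 := by
      ext i j
      have := congrFun (congrFun hKK i.succ) j.succ
      simpa using this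
    have hS'T' : S' * T' = T' * S' := by
      ext i j
      have := congrFun (congrFun hJK i.succ) j.succ
      simpa using this
    obtain ⟨h, h', d₁, d₂, hhh', hh'h, hd₁, hd₂, hdiag₁, hdiag₂⟩ := ih S' T' hS'S' hT'T' hS'T'
    refine ⟨mext 1 h * g0', g0 * mext 1 h', Fin.cons a d₁, Fin.cons b d₂, ?_, ?_, ?_, ?_, ?_, ?_⟩
    · calc mext 1 h * g0' * (g0 * mext 1 h') = mext 1 h * (g0' * g0) * mext 1 h' := by
            noncomm_ring
        _ = 1 := by rw [hg0g, mul_one, mext_mul, hhh', one_mul, mext_one]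
    · calc g0 * mext 1 h' * (mext 1 h * g0') = g0 * (mext 1 h' * mext 1 h) * g0' := by
            noncomm_ring
        _ = 1 := by rw [mext_mul, hh'h, one_mul, mext_one, mul_one, hgg0]
    · intro i
      refine Fin.cases ?_ (fun i => ?_) i
      · simpa using ha
      · simpa using hd₁ i
    · intro i
      refine Fin.cases ?_ (fun i => ?_) i
      · simpa using hb
      · simpa using hd₂ i
    · calc mext 1 h * g0' * S * (g0 * mext 1 h')
          = mext 1 h * (g0' * S * g0) * mext 1 h' := by noncomm_ring
        _ = mext 1 h * mext a S' * mext 1 h' := by rw [hJ]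
        _ = mext (1 * a * 1) (h * S' * h') := by rw [mext_mul, mext_mul]
        _ = mext a (Matrix.diagonal d₁) := by rw [hdiag₁, one_mul, mul_one]
        _ = Matrix.diagonal (Fin.cons a d₁) := mext_diagonal a d₁
    · calc mext 1 h * g0' * T * (g0 * mext 1 h')
          = mext 1 h * (g0' * T * g0) * mext 1 h' := by noncomm_ring
        _ = mext 1 h * mext b T' * mext 1 h' := by rw [hK]
        _ = mext (1 * b * 1) (h * T' * h') := by rw [mext_mul, mext_mul]
        _ = mext b (Matrix.diagonal d₂) := by rw [hdiag₂, one_mul, mul_one]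
        _ = Matrix.diagonal (Fin.cons b d₂) := mext_diagonal b d₂
end

theorem stmt_5 (R : Type*) [Ring R] [Nontrivial R] [IsLocalRing R] (h2 : IsUnit (2 : R))
    (n : ℕ) (I₁ I₂ : (Matrix (Fin n) (Fin n) R)ˣ)
    (h₁ : I₁ ^ 2 = 1) (h₂ : I₂ ^ 2 = 1) (hc : I₁ * I₂ = I₂ * I₁) :
    ∃ g : (Matrix (Fin n) (Fin n) R)ˣ, ∃ d₁ d₂ : Fin n → R,
      (∀ i, d₁ i = 1 ∨ d₁ i = -1) ∧ (∀ i, d₂ i = 1 ∨ d₂ i = -1) ∧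
      Units.val (g * I₁ * g⁻¹) = Matrix.diagonal d₁ ∧
      Units.val (g * I₂ * g⁻¹) = Matrix.diagonal d₂ := by
  have hS : I₁.val * I₁.val = 1 := by
    have := congrArg Units.val h₁
    rwa [sq, Units.val_mul, Units.val_one] at this
  have hT : I₂.val * I₂.val = 1 := by
    have := congrArg Units.val h₂
    rwa [sq, Units.val_mul, Units.val_one] at this
  have hST : I₁.val * I₂.val = I₂.val * I₁.val := by
    have := congrArg Units.val hc
    rwa [Units.val_mul, Units.val_mul] at this
  obtain ⟨g, g', d₁, d₂, hgg', hg'g, hd₁, hd₂, hdiag₁, hdiag₂⟩ :=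
    key_diag h2 n I₁.val I₂.val hS hT hST
  refine ⟨⟨g, g', hgg', hg'g⟩, d₁, d₂, hd₁, hd₂, ?_, ?_⟩
  · exact hdiag₁
  · exact hdiag₂
end
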